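/- Let b10 > 0, c01 ≥ 0, and let c11, b11 be real numbers. Then there exists a pair (P11, t) in the feasible set with t > γ' + δ'·P11 (i.e., the positive treatment set is nonempty) if and only if c11 < b11. (Theorem 2: the positive treatment set is nonempty if and only if the causal profitability condition holds.) -/

import Mathlib

/-- Theorem 2: the positive treatment set is nonempty if and only if the
causal profitability condition `c11 < b11` holds. -/
theorem positive_treatment_set_nonempty_iff
    (b10 c01 c11 b11 : ℝ) (hb : b10 > 0) (hc : c01 ≥ 0) :
    (∃ P11 t : ℝ, 0 ≤ P11 ∧ P11 ≤ 1 ∧ P11 - 1 ≤ t ∧ t ≤ P11 ∧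
        t > c01 / b10 + (b10 - b11 + c11 - c01) / b10 * P11) ↔
      c11 < b11 := by
  constructor
  · rintro ⟨P, t, hP0, hP1, _, htP, hpos⟩
    -- multiply through by b10 > 0
    have h1 : c01 / b10 * b10 = c01 := div_mul_cancel₀ _ (ne_of_gt hb)
    have h2 : (b10 - b11 + c11 - c01) / b10 * b10 = b10 - b11 + c11 - c01 :=
      div_mul_cancel₀ _ (ne_of_gt hb)
    have key : t * b10 > c01 + (b10 - b11 + c11 - c01) * P := by
      have := (mul_lt_mul_of_pos_right hpos hb)
      nlinarith [this]
    -- t ≤ P, so P*b10 > c01 + (b10 - b11 + c11 - c01)*P, i.e. P*(b11 - c11 + c01) > c01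
    have hPk : P * (b11 - c11 + c01) > c01 := by nlinarith
    by_contra h
    push_neg at h
    nlinarith
  · intro h
    set s := c01 / b10 + (b10 - b11 + c11 - c01) / b10 with hs
    clear_value s
    have hs1 : s < 1 := by
      rw [hs, ← add_div, div_lt_one hb]
      linarith
    refine ⟨1, max 0 ((s + 1) / 2), zero_le_one, le_refl 1, ?_, ?_, ?_⟩
    · simp [le_max_left]
    · apply max_le (by norm_num) (by linarith)
    · have h2 : (s + 1) / 2 > s := by linarith
      rw [mul_one, ← hs]
      exact lt_of_lt_of_le h2 (le_max_right _ _)
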